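/- arXiv:2305.04016 — 5 statements merged into one kernel-verified Lean document; each statement's English description precedes it below -/
import Mathlib

section
/- Let n ≥ 2, s ∈ (0,1), and let φ be a Young function satisfying the doubling condition with constant K_φ < 2^{n/s}. Then ∫₀ᵗ (τ/φ(τ))^{s/(n-s)} dτ < ∞ for every t > 0. -/
open Filter MeasureTheory

/-- If φ is a Young function with doubling constant `K < 2^{n/s}`, then
`∫₀ᵗ (τ/φ(τ))^{s/(n-s)} dτ < ∞` for every `t > 0`. -/
theorem young_integral_finite (n : ℕ) (hn : 2 ≤ n) (s : ℝ) (hs : s ∈ Set.Ioo (0:ℝ) 1)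
    (φ : ℝ → ℝ)
    (hconv : ConvexOn ℝ (Set.Ici 0) φ) (hcont : Continuous φ)
    (h0 : φ 0 = 0) (hpos : ∀ t > 0, 0 < φ t)
    (htop : Tendsto φ atTop atTop)
    (K : ℝ) (hK : ∀ t > 0, φ (2 * t) ≤ K * φ t) (hKlt : K < 2 ^ ((n : ℝ) / s)) :
    ∀ t > 0, IntegrableOn (fun τ => (τ / φ τ) ^ (s / ((n : ℝ) - s))) (Set.Ioo 0 t) := by
  intro t ht
  obtain ⟨hs0, hs1⟩ := hs
  have hn2 : (2:ℝ) ≤ n := by exact_mod_cast hn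
  have hns : (0:ℝ) < (n:ℝ) - s := by linarith
  set a := s / ((n:ℝ) - s) with ha
  have hαpos : 0 < a := div_pos hs0 hns
  -- φ is monotone on [0, ∞)
  have hmono : ∀ x y : ℝ, 0 ≤ x → x ≤ y → φ x ≤ φ y := by
    intro x y hx hxy
    rcases eq_or_lt_of_le hxy with rfl | hlt
    · exact le_rfl
    have hy : 0 < y := lt_of_le_of_lt hx hlt
    have h1 : φ ((1 - x/y) * 0 + (x/y) * y) ≤ (1 - x/y) * φ 0 + (x/y) * φ y := by
      apply hconv.2 (Set.mem_Ici.2 le_rfl) (Set.mem_Ici.2 hy.le)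
      · have : x / y ≤ 1 := div_le_one_of_le₀ hxy hy.le
        linarith
      · positivity
      · ring
    have hxy' : (1 - x/y) * 0 + (x/y) * y = x := by field_simp; ring
    rw [hxy', h0] at h1
    have : (x/y) * φ y ≤ φ y := by
      have hd : x / y ≤ 1 := div_le_one_of_le₀ hxy hy.le
      nlinarith [hpos y hy]
    linarith
  -- K ≥ 2
  have hφ1 : 0 < φ 1 := hpos 1 one_pos
  have hK2 : (2:ℝ) ≤ K := by
    have h1 : φ 1 ≤ (1/2) * φ 0 + (1/2) * φ 2 := by
      have := hconv.2 (Set.mem_Ici.2 (le_refl (0:ℝ))) (Set.mem_Ici.2 (by norm_num : (0:ℝ) ≤ 2))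
        (by norm_num : (0:ℝ) ≤ 1/2) (by norm_num : (0:ℝ) ≤ 1/2) (by norm_num)
      simpa using this
    rw [h0] at h1
    have h2 : φ 2 ≤ K * φ 1 := by simpa using hK 1 one_pos
    nlinarith
  have hKpos : (0:ℝ) < K := by linarith
  set β := Real.logb 2 K with hβ
  have hKeq : (2:ℝ) ^ β = K := Real.rpow_logb (by norm_num) (by norm_num) hKpos
  have hβ1 : (1:ℝ) ≤ β := by
    have := Real.logb_le_logb_of_le (b := 2) (by norm_num) (by norm_num : (0:ℝ) < 2) hK2
    simpa using this
  have hβlt : β < (n:ℝ) / s := by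
    have h1 : Real.logb 2 K < Real.logb 2 ((2:ℝ) ^ ((n:ℝ)/s)) :=
      Real.logb_lt_logb (by norm_num) hKpos hKlt
    rwa [Real.logb_rpow (by norm_num) (by norm_num)] at h1
  -- iteration of doubling
  have hφt : 0 < φ t := hpos t ht
  have hiter : ∀ m : ℕ, ∀ τ : ℝ, 0 < τ → φ ((2:ℝ)^m * τ) ≤ K^m * φ τ := by
    intro m
    induction m with
    | zero => intro τ hτ; simp
    | succ m ih =>
      intro τ hτ
      have h1 : (2:ℝ)^(m+1) * τ = 2 * ((2:ℝ)^m * τ) := by ring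
      rw [h1]
      calc φ (2 * ((2:ℝ)^m * τ)) ≤ K * φ ((2:ℝ)^m * τ) := hK _ (by positivity)
        _ ≤ K * (K^m * φ τ) := by
            exact mul_le_mul_of_nonneg_left (ih τ hτ) hKpos.le
        _ = K^(m+1) * φ τ := by ring
  -- key lower bound for φ
  have key : ∀ τ : ℝ, 0 < τ → τ < t → φ t / (K * (t/τ)^β) ≤ φ τ := by
    intro τ hτ hτt
    set r := t / τ with hr
    have hr1 : (1:ℝ) ≤ r := (one_le_div hτ).2 hτt.le
    have hrpos : 0 < r := lt_of_lt_of_le one_pos hr1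
    have hL0 : 0 ≤ Real.logb 2 r := Real.logb_nonneg (by norm_num) hr1
    set m := ⌈Real.logb 2 r⌉₊ with hm
    have hm1 : Real.logb 2 r ≤ m := Nat.le_ceil _
    have hm2 : (m:ℝ) ≤ Real.logb 2 r + 1 := by
      have := Nat.ceil_lt_add_one hL0
      linarith
    -- t ≤ 2^m τ
    have hrm : r ≤ (2:ℝ)^m := by
      have h1 : r = (2:ℝ) ^ (Real.logb 2 r) := (Real.rpow_logb (by norm_num) (by norm_num) hrpos).symm
      have h2 : (2:ℝ) ^ (Real.logb 2 r) ≤ (2:ℝ) ^ (m:ℝ) :=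
        Real.rpow_le_rpow_of_exponent_le (by norm_num) hm1
      rw [Real.rpow_natCast] at h2
      linarith [h1 ▸ h2]
    have htm : t ≤ (2:ℝ)^m * τ := by
      rw [hr] at hrm
      calc t = (t/τ) * τ := by field_simp
        _ ≤ (2:ℝ)^m * τ := mul_le_mul_of_nonneg_right hrm hτ.le
    have h3 : φ t ≤ K^m * φ τ := le_trans (hmono t ((2:ℝ)^m * τ) ht.le htm) (hiter m τ hτ)
    -- K^m ≤ K * r^β
    have h4 : K^m ≤ K * r^β := by
      have e1 : (K:ℝ)^m = (2:ℝ) ^ (β * m) := by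
        rw [← hKeq, ← Real.rpow_natCast ((2:ℝ)^β) m, ← Real.rpow_mul (by norm_num)]
      have e2 : (2:ℝ) ^ (β * m) ≤ (2:ℝ) ^ (β * (Real.logb 2 r + 1)) := by
        apply Real.rpow_le_rpow_of_exponent_le (by norm_num)
        exact mul_le_mul_of_nonneg_left hm2 (by linarith)
      have e3 : (2:ℝ) ^ (β * (Real.logb 2 r + 1)) = K * r^β := by
        rw [mul_add, mul_one, Real.rpow_add (by norm_num), hKeq, mul_comm β (Real.logb 2 r),
          Real.rpow_mul (by norm_num), Real.rpow_logb (by norm_num) (by norm_num) hrpos,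
          mul_comm]
      rw [e1]
      linarith [e2, e3 ▸ e2]
    have hKrβ : 0 < K * r^β := mul_pos hKpos (Real.rpow_pos_of_pos hrpos β)
    rw [div_le_iff₀ hKrβ]
    calc φ t ≤ K^m * φ τ := h3
      _ ≤ (K * r^β) * φ τ := mul_le_mul_of_nonneg_right h4 (hpos τ hτ).le
      _ = φ τ * (K * r^β) := by ring
  -- bound on the integrand
  set D := K * t ^ β / φ t with hD
  have hDpos : 0 < D := by
    apply div_pos (mul_pos hKpos (Real.rpow_pos_of_pos ht β)) hφt
  have hbound : ∀ τ ∈ Set.Ioo (0:ℝ) t,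
      ‖(τ / φ τ) ^ a‖ ≤ D^a * τ ^ ((1-β)*a) := by
    intro τ hτ
    obtain ⟨hτ0, hτt⟩ := hτ
    have hφτ : 0 < φ τ := hpos τ hτ0
    have hkey := key τ hτ0 hτt
    have hlow : 0 < φ t / (K * (t/τ)^β) :=
      div_pos hφt (mul_pos hKpos (Real.rpow_pos_of_pos (div_pos ht hτ0) β))
    have h5 : τ / φ τ ≤ τ / (φ t / (K * (t/τ)^β)) :=
      div_le_div_of_nonneg_left hτ0.le hlow hkey
    have h6 : τ / (φ t / (K * (t/τ)^β)) = D * τ ^ (1-β) := by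
      rw [hD, Real.rpow_sub hτ0, Real.rpow_one, Real.div_rpow ht.le hτ0.le]
      have hτβ : (0:ℝ) < τ ^ β := Real.rpow_pos_of_pos hτ0 β
      have htβ : (0:ℝ) < t ^ β := Real.rpow_pos_of_pos ht β
      field_simp
    rw [h6] at h5
    have hq : 0 ≤ τ / φ τ := div_nonneg hτ0.le hφτ.le
    have h7 : (τ / φ τ) ^ a ≤ (D * τ ^ (1-β)) ^ a :=
      Real.rpow_le_rpow hq h5 hαpos.le
    have h8 : (D * τ ^ (1-β)) ^ a = D^a * τ ^ ((1-β)*a) := by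
      rw [Real.mul_rpow hDpos.le (Real.rpow_pos_of_pos hτ0 _).le,
        ← Real.rpow_mul hτ0.le]
    rw [← h8]
    have hppos : 0 < (τ / φ τ) ^ a := Real.rpow_pos_of_pos (div_pos hτ0 hφτ) a
    rw [Real.norm_eq_abs, abs_of_pos hppos]
    exact h7
  -- exponent > -1
  have hp : -1 < (1-β)*a := by
    have h1 : β * s < n := (lt_div_iff₀ hs0).mp hβlt
    have h2 : (β-1) * a < 1 := by
      rw [ha, mul_div_assoc', div_lt_one hns]
      nlinarith
    nlinarith
  have hmeas : AEStronglyMeasurable (fun τ => (τ / φ τ) ^ a)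
      (volume.restrict (Set.Ioo (0:ℝ) t)) := by
    apply ContinuousOn.aestronglyMeasurable _ measurableSet_Ioo
    apply ContinuousOn.rpow_const
    · exact ContinuousOn.div continuousOn_id hcont.continuousOn
        (fun x hx => (hpos x hx.1).ne')
    · intro x hx; exact Or.inr hαpos.le
  have hint : IntegrableOn (fun τ => D^a * τ ^ ((1-β)*a)) (Set.Ioo 0 t) := by
    apply Integrable.const_mul
    have h := intervalIntegral.intervalIntegrable_rpow' (a := 0) (b := t) hp
    rw [intervalIntegrable_iff_integrableOn_Ioc_of_le ht.le] at h
    exact h.mono_set Set.Ioo_subset_Ioc_self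
  exact Integrable.mono' hint hmeas
    ((ae_restrict_iff' measurableSet_Ioo).2 (ae_of_all _ hbound))
end

section
/- Let n ≥ 2, s ∈ (0,1), and let φ be a Young function satisfying the doubling condition with constant K_φ < 2^{n/s}. Then ∫₀^∞ (τ/φ(τ))^{s/(n-s)} dτ = ∞. -/
open Filter MeasureTheory

/-- Scaling a set-lintegral over `Ioc` by a positive factor. -/
lemma lintegral_Ioc_scale {a : ℝ} (ha : 0 < a) (g : ℝ → ENNReal) (hg : Measurable g)
    (c d : ℝ) :
    ∫⁻ x in Set.Ioc (a * c) (a * d), g x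
      = ENNReal.ofReal a * ∫⁻ x in Set.Ioc c d, g (a * x) := by
  have hmap := Real.map_volume_mul_left (ne_of_gt ha)
  have hpre : (fun x : ℝ => a * x) ⁻¹' Set.Ioc (a * c) (a * d) = Set.Ioc c d := by
    ext x
    simp [Set.mem_Ioc, mul_lt_mul_iff_right₀ ha, mul_le_mul_iff_right₀ ha]
  have h1 : ∫⁻ y in Set.Ioc (a * c) (a * d), g y ∂(Measure.map (fun x : ℝ => a * x) volume)
      = ∫⁻ x in Set.Ioc c d, g (a * x) := by
    rw [setLIntegral_map measurableSet_Ioc hg (measurable_const_mul a), hpre]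
  rw [hmap] at h1
  rw [Measure.restrict_smul, lintegral_smul_measure] at h1
  rw [← h1, abs_of_pos (inv_pos.mpr ha), smul_eq_mul, ← mul_assoc, ← ENNReal.ofReal_mul ha.le,
    mul_inv_cancel₀ (ne_of_gt ha), ENNReal.ofReal_one, one_mul]

/-- If φ is a Young function with doubling constant `K < 2^{n/s}`, then
`∫₀^∞ (τ/φ(τ))^{s/(n-s)} dτ = ∞`. -/
theorem young_integral_infinite (n : ℕ) (hn : 2 ≤ n) (s : ℝ) (hs : s ∈ Set.Ioo (0:ℝ) 1)
    (φ : ℝ → ℝ)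
    (hconv : ConvexOn ℝ (Set.Ici 0) φ) (hcont : Continuous φ)
    (h0 : φ 0 = 0) (hpos : ∀ t > 0, 0 < φ t)
    (htop : Tendsto φ atTop atTop)
    (K : ℝ) (hK : ∀ t > 0, φ (2 * t) ≤ K * φ t) (hKlt : K < 2 ^ ((n : ℝ) / s)) :
    ∫⁻ τ in Set.Ioi (0:ℝ), ENNReal.ofReal ((τ / φ τ) ^ (s / ((n : ℝ) - s))) = ⊤ := by
  obtain ⟨hs0, hs1⟩ := hs
  set p : ℝ := s / ((n : ℝ) - s) with hp_def
  have hn2 : (2:ℝ) ≤ (n : ℝ) := by exact_mod_cast hn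
  have hns : (0:ℝ) < (n : ℝ) - s := by linarith
  have hp : 0 < p := div_pos hs0 hns
  have hK0 : 0 < K := by
    have h1 : 0 < φ 1 := hpos 1 one_pos
    have h2 : 0 < φ 2 := hpos 2 two_pos
    have := hK 1 one_pos
    rw [mul_one] at this
    nlinarith
  -- the constant `c = 2 * (2/K)^p ≥ 1`
  have hKp : (0:ℝ) < K ^ p := Real.rpow_pos_of_pos hK0 p
  have hexp : ((n : ℝ) / s) * p = 1 + p := by
    rw [hp_def]
    field_simp
    ring
  have hc1 : (1:ℝ) ≤ 2 * ((2 / K) ^ p) := by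
    have hKle : K ^ p ≤ 2 ^ (1 + p) := by
      calc K ^ p ≤ ((2:ℝ) ^ ((n : ℝ) / s)) ^ p :=
            Real.rpow_le_rpow hK0.le hKlt.le hp.le
        _ = 2 ^ (((n : ℝ) / s) * p) := by
            rw [← Real.rpow_mul (by norm_num : (0:ℝ) ≤ 2)]
        _ = 2 ^ (1 + p) := by rw [hexp]
    have h2p : (2:ℝ) ^ (1 + p) = 2 * 2 ^ p := by
      rw [Real.rpow_add (by norm_num : (0:ℝ) < 2), Real.rpow_one]
    rw [Real.div_rpow (by norm_num) hK0.le, mul_div_assoc', one_le_div hKp, ← h2p]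
    exact hKle
  -- key pointwise doubling inequality
  have key : ∀ σ : ℝ, 0 < σ → (σ / φ σ) ^ p ≤ 2 * ((2 * σ / φ (2 * σ)) ^ p) := by
    intro σ hσ
    have hφσ : 0 < φ σ := hpos σ hσ
    have hφ2σ : 0 < φ (2 * σ) := hpos _ (by linarith)
    have hdbl : φ (2 * σ) ≤ K * φ σ := hK σ hσ
    have step : (2 / K) * (σ / φ σ) ≤ (2 * σ) / φ (2 * σ) := by
      rw [div_mul_div_comm]
      gcongr
    have hstep : ((2 / K) * (σ / φ σ)) ^ p ≤ ((2 * σ) / φ (2 * σ)) ^ p :=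
      Real.rpow_le_rpow (by positivity) step hp.le
    rw [Real.mul_rpow (by positivity) (by positivity)] at hstep
    calc (σ / φ σ) ^ p = 1 * (σ / φ σ) ^ p := (one_mul _).symm
      _ ≤ (2 * (2 / K) ^ p) * (σ / φ σ) ^ p := by
          apply mul_le_mul_of_nonneg_right hc1 (by positivity)
      _ = 2 * ((2 / K) ^ p * (σ / φ σ) ^ p) := by ring
      _ ≤ 2 * ((2 * σ) / φ (2 * σ)) ^ p := by linarith
  -- iterated version
  have iter : ∀ m : ℕ, ∀ σ : ℝ, 0 < σ →
      (σ / φ σ) ^ p ≤ 2 ^ m * ((2 ^ m * σ / φ (2 ^ m * σ)) ^ p) := by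
    intro m
    induction m with
    | zero => intro σ hσ; simp
    | succ m ih =>
        intro σ hσ
        have h1 := key σ hσ
        have h2 := ih (2 * σ) (by linarith)
        have he : (2:ℝ) ^ m * (2 * σ) = 2 ^ (m + 1) * σ := by ring
        rw [he] at h2
        calc (σ / φ σ) ^ p ≤ 2 * ((2 * σ / φ (2 * σ)) ^ p) := h1
          _ ≤ 2 * (2 ^ m * ((2 ^ (m + 1) * σ / φ (2 ^ (m + 1) * σ)) ^ p)) := by linarith
          _ = 2 ^ (m + 1) * ((2 ^ (m + 1) * σ / φ (2 ^ (m + 1) * σ)) ^ p) := by ring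
  set f : ℝ → ENNReal := fun τ => ENNReal.ofReal ((τ / φ τ) ^ p) with hf_def
  have hfm : Measurable f := by
    apply ENNReal.measurable_ofReal.comp
    exact (Real.continuous_rpow_const hp.le).measurable.comp
      (measurable_id.div hcont.measurable)
  -- lower bound for the base integral ε
  set ε : ENNReal := ∫⁻ x in Set.Ioc (1:ℝ) 2, f x with hε_def
  have hε : 0 < ε := by
    have hco : ContinuousOn (fun τ => (τ / φ τ) ^ p) (Set.Icc (1:ℝ) 2) := by
      apply ContinuousOn.rpow_const
      · exact (continuous_id.continuousOn.div hcont.continuousOn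
          (fun x hx => ne_of_gt (hpos x (by linarith [hx.1]))))
      · intro x _; right; exact hp.le
    obtain ⟨t0, ht0, hmin⟩ := (isCompact_Icc (a := (1:ℝ)) (b := 2)).exists_isMinOn
      (Set.nonempty_Icc.mpr (by norm_num)) hco
    have ht0pos : 0 < t0 := by linarith [ht0.1]
    have hδ : 0 < (t0 / φ t0) ^ p :=
      Real.rpow_pos_of_pos (div_pos ht0pos (hpos t0 ht0pos)) p
    have hlb : ∫⁻ x in Set.Ioc (1:ℝ) 2, ENNReal.ofReal ((t0 / φ t0) ^ p) ≤ ε := by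
      apply setLIntegral_mono (hfm) fun x hx => ?_
      exact ENNReal.ofReal_le_ofReal (hmin (Set.Ioc_subset_Icc_self hx))
    rw [setLIntegral_const] at hlb
    refine lt_of_lt_of_le ?_ hlb
    rw [Real.volume_Ioc]
    have : (0:ENNReal) < ENNReal.ofReal ((t0 / φ t0) ^ p) := ENNReal.ofReal_pos.mpr hδ
    have h21 : (0:ENNReal) < ENNReal.ofReal (2 - 1) := by norm_num
    exact ENNReal.mul_pos (ne_of_gt this) (ne_of_gt h21)
  -- each dyadic block integral is at least ε
  have hblock : ∀ m : ℕ, ε ≤ ∫⁻ x in Set.Ioc ((2:ℝ) ^ m) (2 ^ (m + 1)), f x := by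
    intro m
    have h2m : (0:ℝ) < 2 ^ m := by positivity
    have heq : Set.Ioc ((2:ℝ) ^ m) (2 ^ (m + 1))
        = Set.Ioc ((2:ℝ) ^ m * 1) ((2:ℝ) ^ m * 2) := by
      congr 1 <;> ring
    rw [heq, lintegral_Ioc_scale h2m f hfm]
    have hpt : ∀ x ∈ Set.Ioc (1:ℝ) 2, f x ≤ ENNReal.ofReal ((2:ℝ) ^ m) * f (2 ^ m * x) := by
      intro x hx
      have hx0 : 0 < x := by linarith [hx.1]
      have := iter m x hx0
      calc f x ≤ ENNReal.ofReal (2 ^ m * ((2 ^ m * x / φ (2 ^ m * x)) ^ p)) :=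
            ENNReal.ofReal_le_ofReal this
        _ = ENNReal.ofReal ((2:ℝ) ^ m) * f (2 ^ m * x) := by
            rw [ENNReal.ofReal_mul h2m.le]
    calc ε = ∫⁻ x in Set.Ioc (1:ℝ) 2, f x := rfl
      _ ≤ ∫⁻ x in Set.Ioc (1:ℝ) 2, ENNReal.ofReal ((2:ℝ) ^ m) * f (2 ^ m * x) := by
          apply setLIntegral_mono
            (measurable_const.mul (hfm.comp (measurable_const_mul _))) hpt
      _ = ENNReal.ofReal ((2:ℝ) ^ m) * ∫⁻ x in Set.Ioc (1:ℝ) 2, f (2 ^ m * x) :=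
          lintegral_const_mul' _ _ ENNReal.ofReal_ne_top
  -- sum over blocks
  have hdisj : Pairwise (Function.onFun Disjoint
      (fun m : ℕ => Set.Ioc ((2:ℝ) ^ m) (2 ^ (m + 1)))) := by
    intro i j hij
    have h : ∀ a b : ℕ, a < b →
        Disjoint (Set.Ioc ((2:ℝ) ^ a) (2 ^ (a + 1))) (Set.Ioc ((2:ℝ) ^ b) (2 ^ (b + 1))) := by
      intro a b hab
      apply Set.Ioc_disjoint_Ioc.mpr
      have : (2:ℝ) ^ (a + 1) ≤ 2 ^ b := pow_le_pow_right₀ (by norm_num) hab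
      calc min ((2:ℝ) ^ (a + 1)) (2 ^ (b + 1)) ≤ (2:ℝ) ^ (a + 1) := min_le_left _ _
        _ ≤ 2 ^ b := this
        _ ≤ max ((2:ℝ) ^ a) (2 ^ b) := le_max_right _ _
    rcases hij.lt_or_gt with h' | h'
    · exact h i j h'
    · exact (h j i h').symm
  have hsub : (⋃ m : ℕ, Set.Ioc ((2:ℝ) ^ m) (2 ^ (m + 1))) ⊆ Set.Ioi (0:ℝ) := by
    intro x hx
    obtain ⟨m, hm⟩ := Set.mem_iUnion.mp hx
    have : (0:ℝ) < 2 ^ m := by positivity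
    exact Set.mem_Ioi.mpr (lt_trans this hm.1)
  have hmain : (∫⁻ τ in Set.Ioi (0:ℝ), f τ) = ⊤ := by
    rw [eq_top_iff]
    calc (⊤ : ENNReal) = ∑' _ : ℕ, ε := (ENNReal.tsum_const_eq_top_of_ne_zero (ne_of_gt hε)).symm
      _ ≤ ∑' m : ℕ, ∫⁻ x in Set.Ioc ((2:ℝ) ^ m) (2 ^ (m + 1)), f x :=
          ENNReal.tsum_le_tsum hblock
      _ = ∫⁻ x in ⋃ m : ℕ, Set.Ioc ((2:ℝ) ^ m) (2 ^ (m + 1)), f x :=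
          (lintegral_iUnion (fun _ => measurableSet_Ioc) hdisj f).symm
      _ ≤ ∫⁻ τ in Set.Ioi (0:ℝ), f τ := lintegral_mono_set hsub
  exact hmain
end

section
/- Let n ≥ 2, s ∈ (0,1), and let φ be a Young function with doubling constant K_φ < 2^{n/s}. Define H(t) = (∫₀ᵗ (τ/φ(τ))^{s/(n-s)} dτ)^{(n-s)/n}. Then there exists a constant C, depending only on n, s and K_φ, such that H(A)/A ≤ C · φ(A)^{-s/n} for all A > 0. -/
open Filter MeasureTheory

/-- If φ is a Young function with doubling constant `K < 2^{n/s}` and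
`H(t) = (∫₀ᵗ (τ/φ(τ))^{s/(n-s)} dτ)^{(n-s)/n}`, then there is `C = C(n,s,K)` with
`H(A)/A ≤ C φ(A)^{-s/n}` for all `A > 0`. -/
theorem H_over_A_bound (n : ℕ) (hn : 2 ≤ n) (s : ℝ) (hs : s ∈ Set.Ioo (0:ℝ) 1)
    (φ : ℝ → ℝ)
    (hconv : ConvexOn ℝ (Set.Ici 0) φ) (hcont : Continuous φ)
    (h0 : φ 0 = 0) (hpos : ∀ t > 0, 0 < φ t)
    (htop : Tendsto φ atTop atTop)
    (K : ℝ) (hK : ∀ t > 0, φ (2 * t) ≤ K * φ t) (hKlt : K < 2 ^ ((n : ℝ) / s))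
    (H : ℝ → ℝ)
    (hH : ∀ t, H t = (∫ τ in Set.Ioo (0:ℝ) t, (τ / φ τ) ^ (s / ((n : ℝ) - s))) ^ (((n : ℝ) - s) / n)) :
    ∃ C > 0, ∀ A > 0, H A / A ≤ C * φ A ^ (-(s / (n : ℝ))) := by
  obtain ⟨hs0, hs1⟩ := hs
  have hn2 : (2:ℝ) ≤ (n:ℝ) := by exact_mod_cast hn
  have hns : (0:ℝ) < (n:ℝ) - s := by linarith
  have hnpos : (0:ℝ) < (n:ℝ) := by linarith
  set p : ℝ := s / ((n:ℝ) - s) with hp_def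
  set q : ℝ := ((n:ℝ) - s) / n with hq_def
  have hp_pos : 0 < p := div_pos hs0 hns
  have hq_pos : 0 < q := div_pos hns hnpos
  have hpq : p * q = s / (n:ℝ) := by
    rw [hp_def, hq_def]; field_simp
  have hp1q : (p + 1) * q = 1 := by
    rw [hp_def, hq_def]; field_simp; ring
  -- basic facts about φ
  have hφ0le : ∀ t, 0 ≤ t → 0 ≤ φ t := by
    intro t ht
    rcases ht.eq_or_lt with h | h
    · simp [← h, h0]
    · exact (hpos t h).le
  have hφmono : ∀ a b, 0 ≤ a → a ≤ b → φ a ≤ φ b := by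
    intro a b ha hab
    rcases hab.eq_or_lt with rfl | hab
    · exact le_refl _
    rcases ha.eq_or_lt with rfl | ha0
    · rw [h0]; exact hφ0le b hab.le
    have hb : 0 < b := ha0.trans hab
    have ht0 : (0:ℝ) ≤ a / b := by positivity
    have ht1 : a / b ≤ 1 := by rw [div_le_one hb]; exact hab.le
    have hcv := hconv.2 (Set.self_mem_Ici (a := (0:ℝ)))
      (Set.mem_Ici.2 hb.le) (by linarith : (0:ℝ) ≤ 1 - a / b) ht0 (by ring)
    have he : (1 - a / b) • (0:ℝ) + (a / b) • b = a := by
      rw [smul_eq_mul, smul_eq_mul, mul_zero, zero_add]; field_simp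
    rw [he] at hcv
    have : φ a ≤ (a / b) * φ b := by
      simpa [h0, smul_eq_mul] using hcv
    nlinarith [hφ0le b hb.le]
  -- K ≥ 1
  have hK1 : 1 ≤ K := by
    have h1 := hK 1 one_pos
    norm_num at h1
    have h2 : φ 1 ≤ φ 2 := hφmono 1 2 (by norm_num) (by norm_num)
    have h3 : 0 < φ 1 := hpos 1 one_pos
    nlinarith
  have hK0 : 0 < K := lt_of_lt_of_le one_pos hK1
  have hKp_pos : 0 < K ^ p := Real.rpow_pos_of_pos hK0 p
  set θ : ℝ := K ^ p / 2 ^ (p + 1) with hθ_def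
  have h2p1 : (0:ℝ) < (2:ℝ) ^ (p + 1) := Real.rpow_pos_of_pos two_pos _
  have h2p : (0:ℝ) < (2:ℝ) ^ p := Real.rpow_pos_of_pos two_pos _
  have hθpos : 0 < θ := div_pos hKp_pos h2p1
  have hθlt : θ < 1 := by
    rw [hθ_def, div_lt_one h2p1]
    calc K ^ p < ((2:ℝ) ^ ((n:ℝ) / s)) ^ p :=
          Real.rpow_lt_rpow (by linarith) hKlt hp_pos
      _ = (2:ℝ) ^ (((n:ℝ) / s) * p) := (Real.rpow_mul (by norm_num) _ _).symm
      _ = (2:ℝ) ^ (p + 1) := by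
          congr 1
          rw [hp_def]; field_simp; ring
  have h1θ : 0 < 1 - θ := by linarith
  -- doubling iteration
  have hKiter : ∀ A : ℝ, 0 < A → ∀ m : ℕ, φ A ≤ K ^ m * φ (A / 2 ^ m) := by
    intro A hA m
    induction m with
    | zero => simp
    | succ m ih =>
      have hA2 : 0 < A / 2 ^ (m + 1) := by positivity
      have heq : A / 2 ^ m = 2 * (A / 2 ^ (m + 1)) := by
        rw [pow_succ]; ring
      have h2 : φ (A / 2 ^ m) ≤ K * φ (A / 2 ^ (m + 1)) := by
        rw [heq]; exact hK _ hA2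
      calc φ A ≤ K ^ m * φ (A / 2 ^ m) := ih
        _ ≤ K ^ m * (K * φ (A / 2 ^ (m + 1))) := by
            apply mul_le_mul_of_nonneg_left h2 (by positivity)
        _ = K ^ (m + 1) * φ (A / 2 ^ (m + 1)) := by ring
  -- geometric series bound
  have hsum : ∀ N : ℕ, ∑ k ∈ Finset.range N, θ ^ k ≤ (1 - θ)⁻¹ := by
    intro N
    rw [geom_sum_eq hθlt.ne, show θ ^ N - 1 = -(1 - θ ^ N) by ring,
      show θ - 1 = -(1 - θ) by ring, neg_div_neg_eq, ← one_div]
    exact (div_le_div_iff_of_pos_right h1θ).2 (by nlinarith [pow_nonneg hθpos.le N])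
  -- the constant
  refine ⟨((K ^ p / 2) * (1 - θ)⁻¹) ^ q, Real.rpow_pos_of_pos (by positivity) q, ?_⟩
  intro A hA
  have hφA : 0 < φ A := hpos A hA
  set g : ℝ → ℝ := fun τ => (τ / φ τ) ^ p with hg_def
  set D : ℝ := K ^ p / 2 * A ^ (p + 1) * φ A ^ (-p) with hD_def
  have hD0 : 0 ≤ D := by
    rw [hD_def]; positivity
  -- integrability on Ioc c d for c > 0
  have hgint : ∀ c d : ℝ, 0 < c → IntegrableOn g (Set.Ioc c d) := by
    intro c d hc
    refine (ContinuousOn.integrableOn_Icc ?_).mono_set Set.Ioc_subset_Icc_self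
    refine ContinuousOn.rpow_const ?_ (fun τ _ => Or.inr hp_pos.le)
    exact ContinuousOn.div continuousOn_id hcont.continuousOn
      (fun τ hτ => (hpos τ (lt_of_lt_of_le hc hτ.1)).ne')
  -- key algebraic identity
  have hID : ∀ N : ℕ,
      (A / 2 ^ N * K ^ (N + 1) / φ A) ^ p * (A / 2 ^ (N + 1)) = D * θ ^ N := by
    intro N
    induction N with
    | zero =>
      rw [hD_def]
      rw [pow_zero, div_one, pow_one, pow_zero, mul_one, pow_one,
        Real.div_rpow (by positivity) hφA.le, Real.mul_rpow hA.le hK0.le,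
        Real.rpow_add hA, Real.rpow_one, Real.rpow_neg hφA.le]
      have hφAp : (0:ℝ) < φ A ^ p := Real.rpow_pos_of_pos hφA p
      field_simp
    | succ N ih =>
      have hbase : A / 2 ^ (N + 1) * K ^ (N + 2) / φ A
          = (A / 2 ^ N * K ^ (N + 1) / φ A) * (K / 2) := by
        rw [pow_succ (2:ℝ), pow_succ K]
        field_simp
      have hsplit : (A / 2 ^ (N + 1) * K ^ (N + 2) / φ A) ^ p
          = (A / 2 ^ N * K ^ (N + 1) / φ A) ^ p * (K ^ p / 2 ^ p) := by
        rw [hbase, Real.mul_rpow (by positivity) (by positivity),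
          Real.div_rpow hK0.le (by norm_num)]
      have hθ2 : θ = K ^ p / (2 ^ p * 2) := by
        rw [hθ_def, Real.rpow_add two_pos, Real.rpow_one]
      have hA2 : A / 2 ^ (N + 2) = (A / 2 ^ (N + 1)) * (1 / 2) := by
        rw [pow_succ (2:ℝ)]; ring
      rw [hsplit, hA2, pow_succ θ]
      have h2Np : ((2:ℝ) ^ p) ≠ 0 := h2p.ne'
      calc (A / 2 ^ N * K ^ (N + 1) / φ A) ^ p * (K ^ p / 2 ^ p) * (A / 2 ^ (N + 1) * (1 / 2))
          = ((A / 2 ^ N * K ^ (N + 1) / φ A) ^ p * (A / 2 ^ (N + 1))) * (K ^ p / (2 ^ p * 2)) := by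
            field_simp
        _ = D * θ ^ N * θ := by rw [ih, hθ2]
        _ = D * (θ ^ N * θ) := mul_assoc _ _ _
  -- the dyadic piece bound
  have hpiece : ∀ N : ℕ,
      (∫ τ in Set.Ioc (A / 2 ^ (N + 1)) (A / 2 ^ N), g τ) ≤ D * θ ^ N := by
    intro N
    have hb : (0:ℝ) < A / 2 ^ N := by positivity
    have ha : (0:ℝ) < A / 2 ^ (N + 1) := by positivity
    have hab : A / 2 ^ (N + 1) ≤ A / 2 ^ N :=
      div_le_div_of_nonneg_left hA.le (by positivity) (pow_le_pow_right₀ one_le_two (Nat.le_succ N))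
    have hφa : 0 < φ (A / 2 ^ (N + 1)) := hpos _ ha
    have hiter := hKiter A hA (N + 1)
    have hKN : (0:ℝ) < K ^ (N + 1) := pow_pos hK0 _
    set M : ℝ := (A / 2 ^ N * K ^ (N + 1) / φ A) ^ p with hM_def
    have hMpt : ∀ τ ∈ Set.Ioc (A / 2 ^ (N + 1)) (A / 2 ^ N), g τ ≤ M := by
      intro τ hτ
      have hτ0 : 0 < τ := ha.trans hτ.1
      have hφτ : 0 < φ τ := hpos τ hτ0
      have h1 : τ / φ τ ≤ (A / 2 ^ N) / φ (A / 2 ^ (N + 1)) :=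
        div_le_div₀ hb.le hτ.2 hφa (hφmono _ _ ha.le hτ.1.le)
      have h2 : (A / 2 ^ N) / φ (A / 2 ^ (N + 1)) ≤ A / 2 ^ N * K ^ (N + 1) / φ A := by
        rw [div_le_div_iff₀ hφa hφA]
        calc A / 2 ^ N * φ A ≤ A / 2 ^ N * (K ^ (N + 1) * φ (A / 2 ^ (N + 1))) :=
              mul_le_mul_of_nonneg_left hiter hb.le
          _ = A / 2 ^ N * K ^ (N + 1) * φ (A / 2 ^ (N + 1)) := (mul_assoc _ _ _).symm
      exact Real.rpow_le_rpow (by positivity) (h1.trans h2) hp_pos.le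
    have hint1 : (∫ τ in Set.Ioc (A / 2 ^ (N + 1)) (A / 2 ^ N), g τ)
        ≤ M * (A / 2 ^ N - A / 2 ^ (N + 1)) := by
      have hconst : IntegrableOn (fun _ : ℝ => M) (Set.Ioc (A / 2 ^ (N + 1)) (A / 2 ^ N)) :=
        integrableOn_const measure_Ioc_lt_top.ne
      have h := setIntegral_mono_on (hgint _ _ ha) hconst measurableSet_Ioc hMpt
      rw [setIntegral_const, measureReal_def, Real.volume_Ioc,
        ENNReal.toReal_ofReal (sub_nonneg.2 hab), smul_eq_mul, mul_comm] at h
      exact h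
    have hsub : A / 2 ^ N - A / 2 ^ (N + 1) = A / 2 ^ (N + 1) := by
      rw [pow_succ]; field_simp; ring
    rw [hsub] at hint1
    exact hint1.trans_eq (hID N)
  -- partial integrals bound
  have hS : ∀ N : ℕ, (∫ τ in Set.Ioc (A / 2 ^ N) A, g τ) ≤ D * ∑ k ∈ Finset.range N, θ ^ k := by
    intro N
    induction N with
    | zero => simp [Set.Ioc_self]
    | succ N ih =>
      have ha : (0:ℝ) < A / 2 ^ (N + 1) := by positivity
      have hb : (0:ℝ) < A / 2 ^ N := by positivity
      have hab : A / 2 ^ (N + 1) ≤ A / 2 ^ N :=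
        div_le_div_of_nonneg_left hA.le (by positivity) (pow_le_pow_right₀ one_le_two (Nat.le_succ N))
      have hbA : A / 2 ^ N ≤ A :=
        div_le_self hA.le (one_le_pow₀ one_le_two)
      have hsplit : Set.Ioc (A / 2 ^ (N + 1)) A
          = Set.Ioc (A / 2 ^ (N + 1)) (A / 2 ^ N) ∪ Set.Ioc (A / 2 ^ N) A :=
        (Set.Ioc_union_Ioc_eq_Ioc hab hbA).symm
      rw [hsplit, setIntegral_union (Set.Ioc_disjoint_Ioc_of_le le_rfl) measurableSet_Ioc
        (hgint _ _ ha) (hgint _ _ hb), Finset.sum_range_succ, mul_add]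
      exact add_le_add (hpiece N) ih |>.trans_eq (add_comm _ _)
  have hbound : ∀ N : ℕ, (∫ τ in Set.Ioc (A / 2 ^ N) A, g τ) ≤ D * (1 - θ)⁻¹ :=
    fun N => (hS N).trans (mul_le_mul_of_nonneg_left (hsum N) hD0)
  -- pass to the limit
  have hIbound : (∫ τ in Set.Ioo (0:ℝ) A, g τ) ≤ D * (1 - θ)⁻¹ := by
    by_cases hInt : IntegrableOn g (Set.Ioo (0:ℝ) A)
    · have hmono : Monotone fun N : ℕ => Set.Ioc (A / 2 ^ N) A := by
        intro N M hNM
        exact Set.Ioc_subset_Ioc_left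
          (div_le_div_of_nonneg_left hA.le (by positivity) (pow_le_pow_right₀ one_le_two hNM))
      have hunion : ⋃ N : ℕ, Set.Ioc (A / 2 ^ N) A = Set.Ioc 0 A := by
        ext τ
        simp only [Set.mem_iUnion, Set.mem_Ioc]
        constructor
        · rintro ⟨N, h1, h2⟩
          exact ⟨lt_trans (by positivity) h1, h2⟩
        · rintro ⟨h1, h2⟩
          obtain ⟨N, hN⟩ := pow_unbounded_of_one_lt (A / τ) (one_lt_two : (1:ℝ) < 2)
          refine ⟨N, ?_, h2⟩
          rw [div_lt_iff₀ (by positivity)]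
          rw [div_lt_iff₀ h1] at hN
          linarith [hN]
      have hIntIoc : IntegrableOn g (Set.Ioc (0:ℝ) A) :=
        (integrableOn_Ioc_iff_integrableOn_Ioo (by simp)).2 hInt
      have hlim := tendsto_setIntegral_of_monotone (fun N => measurableSet_Ioc) hmono
        (hunion ▸ hIntIoc)
      rw [hunion] at hlim
      have hIle : (∫ τ in Set.Ioc (0:ℝ) A, g τ) ≤ D * (1 - θ)⁻¹ :=
        le_of_tendsto hlim (Eventually.of_forall hbound)
      rwa [integral_Ioc_eq_integral_Ioo] at hIle
    · rw [integral_undef hInt]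
      positivity
  have hInonneg : (0:ℝ) ≤ ∫ τ in Set.Ioo (0:ℝ) A, g τ := by
    refine setIntegral_nonneg measurableSet_Ioo (fun τ hτ => ?_)
    exact Real.rpow_nonneg (div_nonneg hτ.1.le (hφ0le τ hτ.1.le)) p
  -- conclude
  have hHA : H A = (∫ τ in Set.Ioo (0:ℝ) A, g τ) ^ q := hH A
  have hfinal : H A ≤ ((K ^ p / 2) * (1 - θ)⁻¹) ^ q * A * φ A ^ (-(s / (n:ℝ))) := by
    rw [hHA]
    calc (∫ τ in Set.Ioo (0:ℝ) A, g τ) ^ q ≤ (D * (1 - θ)⁻¹) ^ q :=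
          Real.rpow_le_rpow hInonneg hIbound hq_pos.le
      _ = ((K ^ p / 2) * (1 - θ)⁻¹) ^ q * A * φ A ^ (-(s / (n:ℝ))) := by
          rw [hD_def, show K ^ p / 2 * A ^ (p + 1) * φ A ^ (-p) * (1 - θ)⁻¹
              = (K ^ p / 2 * (1 - θ)⁻¹) * (A ^ (p + 1)) * (φ A ^ (-p)) by ring]
          rw [Real.mul_rpow (by positivity) (by positivity),
            Real.mul_rpow (by positivity) (by positivity),
            ← Real.rpow_mul hA.le, hp1q, Real.rpow_one,
            ← Real.rpow_mul hφA.le, neg_mul, hpq]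
  rw [div_le_iff₀ hA]
  calc H A ≤ ((K ^ p / 2) * (1 - θ)⁻¹) ^ q * A * φ A ^ (-(s / (n:ℝ))) := hfinal
    _ = ((K ^ p / 2) * (1 - θ)⁻¹) ^ q * φ A ^ (-(s / (n:ℝ))) * A := by ring
end

section
/- Let n ≥ 2, s ∈ (0,1), and let φ be a Young function with doubling constant K_φ < 2^{n/s}. Define H(t) = (∫₀ᵗ (τ/φ(τ))^{s/(n-s)} dτ)^{(n-s)/n} and the Sobolev conjugate φ_{n/s} := φ ∘ H^{-1}. Then φ_{n/s} satisfies the Δ₂ doubling condition: sup_{t>0} φ_{n/s}(2t)/φ_{n/s}(t) < ∞. -/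
open Filter MeasureTheory

/-- If φ is a Young function with doubling constant `K < 2^{n/s}`, then the Sobolev
conjugate `φ_{n/s} = φ ∘ H⁻¹` satisfies the Δ₂ doubling condition. -/
theorem sobolev_conjugate_delta2 (n : ℕ) (hn : 2 ≤ n) (s : ℝ) (hs : s ∈ Set.Ioo (0:ℝ) 1)
    (φ : ℝ → ℝ)
    (hconv : ConvexOn ℝ (Set.Ici 0) φ) (hcont : Continuous φ)
    (h0 : φ 0 = 0) (hpos : ∀ t > 0, 0 < φ t)
    (htop : Tendsto φ atTop atTop)
    (K : ℝ) (hK : ∀ t > 0, φ (2 * t) ≤ K * φ t) (hKlt : K < 2 ^ ((n : ℝ) / s))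
    (H : ℝ → ℝ)
    (hH : ∀ t, H t = (∫ τ in Set.Ioo (0:ℝ) t, (τ / φ τ) ^ (s / ((n : ℝ) - s))) ^ (((n : ℝ) - s) / n))
    (Hinv : ℝ → ℝ)
    (hHinv : ∀ t ≥ (0:ℝ), H (Hinv t) = t ∧ Hinv (H t) = t ∧ 0 ≤ Hinv t) :
    ∃ C : ℝ, ∀ t > 0, (φ ∘ Hinv) (2 * t) / (φ ∘ Hinv) t ≤ C := by
  obtain ⟨hs0, hs1⟩ := hs
  have hn2 : (2:ℝ) ≤ (n:ℝ) := by exact_mod_cast hn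
  have hns : 0 < (n:ℝ) - s := by linarith
  have hnpos : 0 < (n:ℝ) := by linarith
  set p : ℝ := s / ((n:ℝ) - s) with hp_def
  set e : ℝ := ((n:ℝ) - s) / n with he_def
  have hp : 0 < p := div_pos hs0 hns
  have he : 0 < e := div_pos hns hnpos
  have hK0 : 0 < K := by
    have h1 := hpos 1 one_pos
    have h2 := hpos (2*1) (by norm_num)
    nlinarith [hK 1 one_pos]
  have φnonneg : ∀ t, 0 ≤ t → 0 ≤ φ t := by
    intro t ht
    rcases ht.lt_or_eq with h | h
    · exact (hpos t h).le
    · rw [← h, h0]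
  have φmono : ∀ a b, 0 ≤ a → a ≤ b → φ a ≤ φ b := by
    intro a b ha hab
    rcases (ha.trans hab).eq_or_lt with hb | hb
    · have : a = 0 := le_antisymm (hab.trans hb.symm.le) ha
      rw [this, ← hb]
    · have hw1 : (0:ℝ) ≤ 1 - a / b := by
        have : a / b ≤ 1 := div_le_one_of_le₀ hab hb.le
        linarith
      have hw2 : (0:ℝ) ≤ a / b := div_nonneg ha hb.le
      have := hconv.2 (Set.mem_Ici.2 le_rfl) (Set.mem_Ici.2 hb.le) hw1 hw2 (by ring)
      simp only [smul_eq_mul, mul_zero, zero_add, h0] at this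
      rw [div_mul_cancel₀ _ hb.ne'] at this
      calc φ a ≤ a / b * φ b := this
        _ ≤ 1 * φ b := by
            apply mul_le_mul_of_nonneg_right (div_le_one_of_le₀ hab hb.le) (φnonneg b hb.le)
        _ = φ b := one_mul _
  set f : ℝ → ℝ := fun τ => (τ / φ τ) ^ p with hf_def
  have fnonneg : ∀ τ, 0 < τ → 0 ≤ f τ := by
    intro τ hτ
    exact Real.rpow_nonneg (div_nonneg hτ.le (hpos τ hτ).le) _
  have Gnonneg : ∀ t : ℝ, 0 ≤ ∫ τ in Set.Ioo (0:ℝ) t, f τ := by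
    intro t
    apply setIntegral_nonneg measurableSet_Ioo
    intro τ hτ
    exact fnonneg τ hτ.1
  have Hnonneg : ∀ t, 0 ≤ H t := by
    intro t; rw [hH t]; exact Real.rpow_nonneg (Gnonneg t) _
  have H0 : H 0 = 0 := by
    rw [hH 0]
    simp [Real.zero_rpow he.ne']
  have Hinv0 : Hinv 0 = 0 := by
    have h := (hHinv 0 le_rfl).2.1
    rwa [H0] at h
  have Hzero : ∀ t, 0 ≤ t → H t = 0 → t = 0 := by
    intro t ht hHt
    have h := (hHinv t ht).2.1
    rw [hHt, Hinv0] at h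
    exact h.symm
  have Hmono : ∀ a b, 0 ≤ a → a ≤ b → H a ≤ H b := by
    intro a b ha hab
    by_cases hint : IntegrableOn f (Set.Ioo 0 b) volume
    · rw [hH a, hH b]
      apply Real.rpow_le_rpow (Gnonneg a) _ he.le
      apply setIntegral_mono_set hint
      · refine (ae_restrict_iff' measurableSet_Ioo).2 (ae_of_all _ ?_)
        intro τ hτ; exact fnonneg τ hτ.1
      · exact (Set.Ioo_subset_Ioo le_rfl hab).eventuallyLE
    · have hb : H b = 0 := by
        rw [hH b, integral_undef hint, Real.zero_rpow he.ne']
      have hb0 : b = 0 := Hzero b (ha.trans hab) hb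
      have ha0 : a = 0 := le_antisymm (hab.trans_eq hb0) ha
      rw [ha0, hb0]
  have Hinvmono : ∀ a b, 0 ≤ a → a ≤ b → Hinv a ≤ Hinv b := by
    intro a b ha hab
    by_contra hcon
    push_neg at hcon
    have h1 := hHinv a ha
    have h2 := hHinv b (ha.trans hab)
    have : b ≤ a := by
      have := Hmono (Hinv b) (Hinv a) h2.2.2 hcon.le
      rwa [h1.1, h2.1] at this
    have hab' : a = b := le_antisymm hab this
    rw [hab'] at hcon
    exact lt_irrefl _ hcon
  -- the doubling constant for H
  set c₀ : ℝ := 2 * (2 / K) ^ p with hc₀_def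
  have h2K : (0:ℝ) < 2 / K := div_pos two_pos hK0
  have hc₀pos : 0 < c₀ := by positivity
  have hc₀gt : 1 < c₀ := by
    have hlow : (2:ℝ) ^ ((1:ℝ) - (n:ℝ)/s) < 2 / K := by
      rw [Real.rpow_sub two_pos, Real.rpow_one]
      apply div_lt_div_of_pos_left two_pos (by positivity) hKlt
    have h2 : ((2:ℝ) ^ ((1:ℝ) - (n:ℝ)/s)) ^ p < (2/K) ^ p :=
      Real.rpow_lt_rpow (by positivity) hlow hp
    rw [← Real.rpow_mul (by norm_num : (0:ℝ) ≤ 2)] at h2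
    have hexp : ((1:ℝ) - (n:ℝ)/s) * p = -1 := by
      rw [hp_def]; field_simp; ring
    rw [hexp] at h2
    have h12 : (2:ℝ) ^ (-1:ℝ) = 1/2 := by
      rw [Real.rpow_neg_one]; norm_num
    rw [h12] at h2
    rw [hc₀_def]; linarith
  set c : ℝ := c₀ ^ e with hc_def
  have hcpos : 0 < c := Real.rpow_pos_of_pos hc₀pos e
  have hc1 : 1 < c := by
    rw [hc_def, Real.one_lt_rpow_iff_of_pos hc₀pos]
    exact Or.inl ⟨hc₀gt, he⟩
  -- key inequality : c * H u ≤ H (2 u)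
  have keyA : ∀ u, 0 ≤ u → c * H u ≤ H (2 * u) := by
    intro u hu
    rcases hu.eq_or_lt with hu0 | hu0
    · rw [← hu0]
      simp [H0]
    by_cases hint2 : IntegrableOn f (Set.Ioo 0 (2*u)) volume
    · have hii2 : IntervalIntegrable f volume 0 (2*u) := by
        rw [intervalIntegrable_iff_integrableOn_Ioo_of_le (by linarith)]
        exact hint2
      have hii1 : IntervalIntegrable f volume 0 u := by
        rw [intervalIntegrable_iff_integrableOn_Ioo_of_le hu]
        exact hint2.mono_set (Set.Ioo_subset_Ioo le_rfl (by linarith))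
      have hii3 : IntervalIntegrable (fun σ => f (2*σ)) volume 0 u := by
        have := hii2.comp_mul_left (c := 2)
        norm_num at this
        exact this
      have hptwise : ∀ σ ∈ Set.Icc (0:ℝ) u, (2/K) ^ p * f σ ≤ f (2*σ) := by
        intro σ hσ
        rcases hσ.1.eq_or_lt with h0' | h0'
        · rw [← h0']
          simp [hf_def, h0, Real.zero_rpow hp.ne']
        · have hφσ := hpos σ h0'
          have hφ2σ := hpos (2*σ) (by linarith)
          have hineq : (2/K) * (σ / φ σ) ≤ (2*σ) / φ (2*σ) := by
            rw [div_mul_div_comm]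
            apply div_le_div_of_nonneg_left (by linarith) (by positivity)
            calc φ (2*σ) ≤ K * φ σ := hK σ h0'
              _ = K * φ σ := rfl
          calc (2/K) ^ p * f σ = ((2/K) * (σ / φ σ)) ^ p := by
                rw [hf_def]
                exact (Real.mul_rpow h2K.le (div_nonneg h0'.le hφσ.le)).symm
            _ ≤ ((2*σ) / φ (2*σ)) ^ p :=
                Real.rpow_le_rpow (by positivity) hineq hp.le
            _ = f (2*σ) := rfl
      have hintineq : (2/K)^p * ∫ σ in (0:ℝ)..u, f σ ≤ ∫ σ in (0:ℝ)..u, f (2*σ) := by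
        rw [← intervalIntegral.integral_const_mul]
        exact intervalIntegral.integral_mono_on hu (hii1.const_mul _) hii3 hptwise
      have hcov : ∫ τ in (0:ℝ)..(2*u), f τ = 2 * ∫ σ in (0:ℝ)..u, f (2*σ) := by
        have := intervalIntegral.smul_integral_comp_mul_left f (a := 0) (b := u) 2
        norm_num at this
        rw [← this]
        norm_num
      have hG : c₀ * ∫ τ in Set.Ioo (0:ℝ) u, f τ ≤ ∫ τ in Set.Ioo (0:ℝ) (2*u), f τ := by
        have e1 : ∫ τ in Set.Ioo (0:ℝ) u, f τ = ∫ τ in (0:ℝ)..u, f τ := by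
          rw [intervalIntegral.integral_of_le hu, integral_Ioc_eq_integral_Ioo]
        have e2 : ∫ τ in Set.Ioo (0:ℝ) (2*u), f τ = ∫ τ in (0:ℝ)..(2*u), f τ := by
          rw [intervalIntegral.integral_of_le (by linarith), integral_Ioc_eq_integral_Ioo]
        rw [e1, e2, hcov, hc₀_def]
        calc 2 * (2/K)^p * ∫ σ in (0:ℝ)..u, f σ
            = 2 * ((2/K)^p * ∫ σ in (0:ℝ)..u, f σ) := by ring
          _ ≤ 2 * ∫ σ in (0:ℝ)..u, f (2*σ) := by linarith
      rw [hH u, hH (2*u)]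
      calc c * (∫ τ in Set.Ioo (0:ℝ) u, f τ) ^ e
          = (c₀ * ∫ τ in Set.Ioo (0:ℝ) u, f τ) ^ e := by
            rw [Real.mul_rpow hc₀pos.le (Gnonneg u), hc_def]
        _ ≤ (∫ τ in Set.Ioo (0:ℝ) (2*u), f τ) ^ e :=
            Real.rpow_le_rpow (mul_nonneg hc₀pos.le (Gnonneg u)) hG he.le
    · exfalso
      have h2u : H (2*u) = 0 := by
        rw [hH (2*u), integral_undef hint2, Real.zero_rpow he.ne']
      have := Hzero (2*u) (by linarith) h2u
      linarith
  -- Hinv (c * y) ≤ 2 * Hinv y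
  have keyB : ∀ y, 0 ≤ y → Hinv (c * y) ≤ 2 * Hinv y := by
    intro y hy
    obtain ⟨hy1, _, hy3⟩ := hHinv y hy
    have h1 : c * y ≤ H (2 * Hinv y) := by
      have := keyA (Hinv y) hy3
      rwa [hy1] at this
    have h2 := Hinvmono (c * y) (H (2 * Hinv y)) (mul_nonneg hcpos.le hy) h1
    rwa [(hHinv (2 * Hinv y) (by linarith)).2.1] at h2
  -- iterate
  have keyC : ∀ m : ℕ, ∀ y, 0 ≤ y → Hinv (c ^ m * y) ≤ 2 ^ m * Hinv y := by
    intro m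
    induction m with
    | zero => intro y hy; simp
    | succ m ih =>
      intro y hy
      have h1 : Hinv (c ^ (m+1) * y) ≤ 2 * Hinv (c ^ m * y) := by
        have h := keyB (c ^ m * y) (mul_nonneg (pow_nonneg hcpos.le m) hy)
        have heq : c ^ (m+1) * y = c * (c ^ m * y) := by ring
        rw [heq]
        exact h
      calc Hinv (c ^ (m+1) * y) ≤ 2 * Hinv (c ^ m * y) := h1
        _ ≤ 2 * (2 ^ m * Hinv y) := by linarith [ih y hy]
        _ = 2 ^ (m+1) * Hinv y := by ring
  -- φ doubling iterated
  have φdoub : ∀ m : ℕ, ∀ x, 0 < x → φ (2 ^ m * x) ≤ K ^ m * φ x := by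
    intro m
    induction m with
    | zero => intro x hx; simp
    | succ m ih =>
      intro x hx
      have h2mx : (0:ℝ) < 2 ^ m * x := by positivity
      calc φ (2 ^ (m+1) * x) = φ (2 * (2 ^ m * x)) := by ring_nf
        _ ≤ K * φ (2 ^ m * x) := hK _ h2mx
        _ ≤ K * (K ^ m * φ x) := by
            exact mul_le_mul_of_nonneg_left (ih x hx) hK0.le
        _ = K ^ (m+1) * φ x := by ring
  obtain ⟨m, hm⟩ := pow_unbounded_of_one_lt (2:ℝ) hc1
  refine ⟨K ^ m, ?_⟩
  intro t ht
  obtain ⟨ht1, _, ht3⟩ := hHinv t ht.le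
  have hxpos : 0 < Hinv t := by
    rcases ht3.eq_or_lt with h | h
    · exfalso
      rw [← h, H0] at ht1
      linarith
    · exact h
  have hchain : Hinv (2 * t) ≤ 2 ^ m * Hinv t := by
    calc Hinv (2 * t) ≤ Hinv (c ^ m * t) := by
          apply Hinvmono _ _ (by linarith)
          exact mul_le_mul_of_nonneg_right hm.le ht.le
      _ ≤ 2 ^ m * Hinv t := keyC m t ht.le
  have h2t3 := (hHinv (2*t) (by linarith)).2.2
  have hφchain : φ (Hinv (2 * t)) ≤ K ^ m * φ (Hinv t) := by
    calc φ (Hinv (2 * t)) ≤ φ (2 ^ m * Hinv t) := φmono _ _ h2t3 hchain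
      _ ≤ K ^ m * φ (Hinv t) := φdoub m _ hxpos
  have hφx : 0 < φ (Hinv t) := hpos _ hxpos
  simp only [Function.comp_apply]
  rw [div_le_iff₀ hφx]
  exact hφchain
end

section
/- Let n ≥ 2, s ∈ (0,1), and let φ be a Young function with doubling constant K_φ < 2^{n/s}. Define H(t) = (∫₀ᵗ (τ/φ(τ))^{s/(n-s)} dτ)^{(n-s)/n} and φ_{n/s} := φ ∘ H^{-1}. Then φ_{n/s} satisfies the ∇₂ condition: with a = 2^{(n-s)/s} > 1, one has φ_{n/s}(x) ≤ (1/(2a)) φ_{n/s}(a x) for all x ≥ 0. -/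
open Filter MeasureTheory

private lemma young_mono {φ : ℝ → ℝ} (hconv : ConvexOn ℝ (Set.Ici 0) φ)
    (h0 : φ 0 = 0) (hnn : ∀ t : ℝ, 0 ≤ t → 0 ≤ φ t) :
    ∀ u v : ℝ, 0 ≤ u → u ≤ v → φ u ≤ φ v := by
  intro u v hu huv
  rcases eq_or_lt_of_le huv with rfl | h
  · exact le_rfl
  have hv : 0 < v := lt_of_le_of_lt hu h
  have hb : 0 ≤ u / v := div_nonneg hu hv.le
  have hb1 : u / v ≤ 1 := (div_le_one hv).2 huv
  have ha : 0 ≤ 1 - u / v := by linarith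
  have h1 : (1 - u / v) + u / v = 1 := by ring
  have hc := hconv.2 (Set.mem_Ici.2 le_rfl) (Set.mem_Ici.2 hv.le) ha hb h1
  simp only [smul_eq_mul, mul_zero, zero_add, h0] at hc
  rw [div_mul_cancel₀ _ hv.ne'] at hc
  calc φ u ≤ u / v * φ v := hc
    _ ≤ 1 * φ v := mul_le_mul_of_nonneg_right hb1 (hnn v hv.le)
    _ = φ v := one_mul _

private lemma young_superadd {φ : ℝ → ℝ} (hconv : ConvexOn ℝ (Set.Ici 0) φ)
    (h0 : φ 0 = 0) :
    ∀ c : ℝ, 1 ≤ c → ∀ y : ℝ, 0 ≤ y → c * φ y ≤ φ (c * y) := by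
  intro c hc y hy
  have hc0 : 0 < c := lt_of_lt_of_le one_pos hc
  have hcy : (0:ℝ) ≤ c * y := mul_nonneg hc0.le hy
  have ha : 0 ≤ 1 / c := by positivity
  have ha1 : 1 / c ≤ 1 := by rw [div_le_one hc0]; exact hc
  have hb : 0 ≤ 1 - 1 / c := by linarith
  have hsum : 1 / c + (1 - 1 / c) = 1 := by ring
  have hcv := hconv.2 (Set.mem_Ici.2 hcy) (Set.mem_Ici.2 (le_refl (0:ℝ))) ha hb hsum
  simp only [smul_eq_mul, mul_zero, add_zero, h0] at hcv
  have harg : 1 / c * (c * y) = y := by field_simp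
  rw [harg] at hcv
  calc c * φ y ≤ c * (1 / c * φ (c * y)) := mul_le_mul_of_nonneg_left hcv hc0.le
    _ = φ (c * y) := by field_simp

private lemma young_lower {φ : ℝ → ℝ}
    (hmono : ∀ u v : ℝ, 0 ≤ u → u ≤ v → φ u ≤ φ v)
    (hpos : ∀ t > (0:ℝ), 0 < φ t)
    {K : ℝ} (hK : ∀ t > (0:ℝ), φ (2 * t) ≤ K * φ t) (hK2 : 2 ≤ K)
    {t : ℝ} (ht : 0 < t) :
    ∀ τ : ℝ, 0 < τ → τ ≤ t → φ t / K * (τ / t) ^ Real.logb 2 K ≤ φ τ := by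
  set β := Real.logb 2 K with hβ
  have hK0 : (0:ℝ) < K := lt_of_lt_of_le two_pos hK2
  have h2β : (2:ℝ) ^ β = K := Real.rpow_logb two_pos (by norm_num) hK0
  have hβ0 : 0 ≤ β := Real.logb_nonneg one_lt_two (by linarith)
  have hφt : 0 < φ t := hpos t ht
  have key : ∀ k : ℕ, ∀ τ : ℝ, t / 2 ^ (k + 1) ≤ τ → τ ≤ t →
      φ t / K * (τ / t) ^ β ≤ φ τ := by
    intro k
    induction k with
    | zero =>
      intro τ h1 h2
      have hτ0 : 0 < τ := lt_of_lt_of_le (by positivity) h1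
      have hstep : φ t / K ≤ φ (t / 2) := by
        have hd := hK (t / 2) (by positivity)
        rw [show 2 * (t / 2) = t by ring] at hd
        rw [div_le_iff₀ hK0]
        nlinarith [hpos (t / 2) (by positivity : (0:ℝ) < t / 2)]
      have h3 : φ (t / 2) ≤ φ τ := by
        apply hmono _ _ (by positivity)
        have : t / 2 ^ (0 + 1 : ℕ) = t / 2 := by norm_num
        linarith [this ▸ h1]
      have hle1 : (τ / t) ^ β ≤ 1 :=
        Real.rpow_le_one (by positivity) ((div_le_one ht).2 h2) hβ0
      have h4 : 0 ≤ φ t / K := by positivity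
      calc φ t / K * (τ / t) ^ β ≤ φ t / K * 1 := mul_le_mul_of_nonneg_left hle1 h4
        _ = φ t / K := mul_one _
        _ ≤ φ τ := le_trans hstep h3
    | succ k ih =>
      intro τ h1 h2
      have hτ0 : 0 < τ := lt_of_lt_of_le (by positivity) h1
      by_cases hcase : t / 2 ^ (k + 1) ≤ τ
      · exact ih τ hcase h2
      push_neg at hcase
      have hpow : (0:ℝ) < 2 ^ (k + 1) := by positivity
      have h2τ1 : t / 2 ^ (k + 1) ≤ 2 * τ := by
        rw [div_le_iff₀ hpow]
        have h1' : t / 2 ^ (k + 2) ≤ τ := h1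
        rw [div_le_iff₀ (by positivity : (0:ℝ) < 2 ^ (k + 2))] at h1'
        have : (2:ℝ) ^ (k + 2) = 2 * 2 ^ (k + 1) := by ring
        nlinarith
      have h2τ2 : 2 * τ ≤ t := by
        rw [lt_div_iff₀ hpow] at hcase
        have h2le : (2:ℝ) ≤ 2 ^ (k + 1) := by
          calc (2:ℝ) = 2 ^ 1 := (pow_one 2).symm
            _ ≤ 2 ^ (k + 1) := pow_le_pow_right₀ one_le_two (by omega)
        nlinarith
      have hIH := ih (2 * τ) h2τ1 h2τ2
      have hdb := hK τ hτ0
      have harg : ((2 * τ) / t) ^ β = K * (τ / t) ^ β := by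
        rw [show (2 * τ) / t = 2 * (τ / t) by ring,
          Real.mul_rpow (by norm_num) (by positivity), h2β]
      rw [harg] at hIH
      have hfin : K * (φ t / K * (τ / t) ^ β) ≤ K * φ τ := by
        calc K * (φ t / K * (τ / t) ^ β) = φ t / K * (K * (τ / t) ^ β) := by ring
          _ ≤ φ (2 * τ) := hIH
          _ ≤ K * φ τ := hdb
      exact le_of_mul_le_mul_left hfin hK0
  intro τ hτ0 hτt
  obtain ⟨k, hk⟩ := pow_unbounded_of_one_lt (t / τ) one_lt_two
  apply key k
  · have hpow : (0:ℝ) < 2 ^ k := by positivity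
    have : t / 2 ^ k < τ := by
      rw [div_lt_iff₀ hpow]
      rw [div_lt_iff₀ hτ0] at hk
      linarith
    have hmono2 : t / 2 ^ (k + 1) ≤ t / 2 ^ k :=
      div_le_div_of_nonneg_left ht.le hpow (pow_le_pow_right₀ one_le_two (by omega))
    linarith
  · exact hτt

private lemma young_g_integrable {φ : ℝ → ℝ} (hcont : Continuous φ)
    (hpos : ∀ t > (0:ℝ), 0 < φ t)
    {K β p t : ℝ} (hK0 : 0 < K) (hp : 0 < p)
    (hβp : (β - 1) * p < 1) (ht : 0 < t)
    (hlow : ∀ τ : ℝ, 0 < τ → τ ≤ t → φ t / K * (τ / t) ^ β ≤ φ τ) :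
    IntegrableOn (fun τ : ℝ => (τ / φ τ) ^ p) (Set.Ioo 0 t) := by
  set α : ℝ := (β - 1) * p with hα
  set C : ℝ := (K * t ^ β / φ t) ^ p with hC
  have hφt : 0 < φ t := hpos t ht
  -- pointwise bound
  have hbound : ∀ τ ∈ Set.Ioo (0:ℝ) t, (τ / φ τ) ^ p ≤ C * τ ^ (-α) := by
    intro τ hτ
    obtain ⟨hτ0, hτt⟩ := hτ
    have hφτ : 0 < φ τ := hpos τ hτ0
    have hA : 0 < φ t / K * (τ / t) ^ β := by positivity
    have hle := hlow τ hτ0 hτt.le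
    have h1 : τ / φ τ ≤ τ / (φ t / K * (τ / t) ^ β) :=
      div_le_div_of_nonneg_left hτ0.le hA hle
    have h2 : τ / (φ t / K * (τ / t) ^ β) = (K * t ^ β / φ t) * τ ^ (1 - β) := by
      rw [Real.div_rpow hτ0.le ht.le, Real.rpow_sub hτ0, Real.rpow_one]
      have hτβ : (0:ℝ) < τ ^ β := Real.rpow_pos_of_pos hτ0 β
      have htβ : (0:ℝ) < t ^ β := Real.rpow_pos_of_pos ht β
      field_simp
    rw [h2] at h1
    have h3 : (τ / φ τ) ^ p ≤ ((K * t ^ β / φ t) * τ ^ (1 - β)) ^ p :=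
      Real.rpow_le_rpow (by positivity) h1 hp.le
    calc (τ / φ τ) ^ p ≤ ((K * t ^ β / φ t) * τ ^ (1 - β)) ^ p := h3
      _ = C * (τ ^ (1 - β)) ^ p := by
          rw [Real.mul_rpow (by positivity) (by positivity)]
      _ = C * τ ^ (-α) := by
          rw [← Real.rpow_mul hτ0.le]
          congr 1
          rw [hα]; ring_nf
  -- dominating function is integrable
  have hint : IntegrableOn (fun τ : ℝ => C * τ ^ (-α)) (Set.Ioo 0 t) := by
    have h1 : IntervalIntegrable (fun τ : ℝ => τ ^ (-α)) volume 0 t :=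
      intervalIntegral.intervalIntegrable_rpow' (by linarith)
    have h2 : IntegrableOn (fun τ : ℝ => τ ^ (-α)) (Set.Ioo 0 t) volume :=
      (intervalIntegrable_iff_integrableOn_Ioo_of_le ht.le).1 h1
    exact h2.const_mul C
  -- measurability
  have hmeas : AEStronglyMeasurable (fun τ : ℝ => (τ / φ τ) ^ p)
      (volume.restrict (Set.Ioo 0 t)) := by
    apply ContinuousOn.aestronglyMeasurable _ measurableSet_Ioo
    apply ContinuousOn.rpow_const
    · exact continuousOn_id.div hcont.continuousOn (fun x hx => (hpos x hx.1).ne')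
    · intro x _; exact Or.inr hp.le
  refine Integrable.mono hint hmeas ?_
  rw [ae_restrict_iff' measurableSet_Ioo]
  refine Filter.Eventually.of_forall (fun τ hτ => ?_)
  have hτ0 := hτ.1
  have hφτ : 0 < φ τ := hpos τ hτ0
  rw [Real.norm_of_nonneg (by positivity), Real.norm_of_nonneg (by positivity)]
  exact hbound τ hτ

/-- If φ is a Young function with doubling constant `K < 2^{n/s}`, then the Sobolev
conjugate `φ_{n/s} = φ ∘ H⁻¹` satisfies the ∇₂ condition with `a = 2^{(n-s)/s}`. -/
theorem sobolev_conjugate_nabla2 (n : ℕ) (hn : 2 ≤ n) (s : ℝ) (hs : s ∈ Set.Ioo (0:ℝ) 1)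
    (φ : ℝ → ℝ)
    (hconv : ConvexOn ℝ (Set.Ici 0) φ) (hcont : Continuous φ)
    (h0 : φ 0 = 0) (hpos : ∀ t > 0, 0 < φ t)
    (htop : Tendsto φ atTop atTop)
    (K : ℝ) (hK : ∀ t > 0, φ (2 * t) ≤ K * φ t) (hKlt : K < 2 ^ ((n : ℝ) / s))
    (H : ℝ → ℝ)
    (hH : ∀ t, H t = (∫ τ in Set.Ioo (0:ℝ) t, (τ / φ τ) ^ (s / ((n : ℝ) - s))) ^ (((n : ℝ) - s) / n))
    (Hinv : ℝ → ℝ)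
    (hHinv : ∀ t ≥ (0:ℝ), H (Hinv t) = t ∧ Hinv (H t) = t ∧ 0 ≤ Hinv t) :
    ∀ x ≥ (0:ℝ),
      (φ ∘ Hinv) x ≤ (1 / (2 * 2 ^ (((n : ℝ) - s) / s))) * (φ ∘ Hinv) (2 ^ (((n : ℝ) - s) / s) * x) := by
  obtain ⟨hs0, hs1⟩ := hs
  have hn2 : (2:ℝ) ≤ (n:ℝ) := by exact_mod_cast hn
  have hns : 0 < (n:ℝ) - s := by linarith
  have hn0 : (0:ℝ) < n := by linarith
  set p : ℝ := s / ((n:ℝ) - s) with hp_def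
  have hp : 0 < p := div_pos hs0 hns
  set q : ℝ := ((n:ℝ) - s) / n with hq_def
  have hq : 0 < q := div_pos hns hn0
  set a : ℝ := 2 ^ (((n:ℝ) - s) / s) with ha_def
  set lam : ℝ := 2 ^ ((n:ℝ) / s) with hlam_def
  have hes : 0 < ((n:ℝ) - s) / s := div_pos hns hs0
  have hens : 0 < (n:ℝ) / s := div_pos hn0 hs0
  have ha1 : 1 < a := (Real.one_lt_rpow_iff_of_pos two_pos).2 (Or.inl ⟨one_lt_two, hes⟩)
  have hlam1 : 1 < lam := (Real.one_lt_rpow_iff_of_pos two_pos).2 (Or.inl ⟨one_lt_two, hens⟩)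
  have ha0 : 0 < a := lt_trans one_pos ha1
  have hlam0 : 0 < lam := lt_trans one_pos hlam1
  have hlam_eq : lam = 2 * a := by
    rw [hlam_def, ha_def, show (n:ℝ) / s = 1 + ((n:ℝ) - s) / s by field_simp; ring,
      Real.rpow_add two_pos, Real.rpow_one]
  have hlamq : lam ^ q = a := by
    rw [hlam_def, ha_def, ← Real.rpow_mul (by norm_num : (0:ℝ) ≤ 2)]
    congr 1
    rw [hq_def]
    field_simp
  -- basic facts about φ
  have hφnn : ∀ u : ℝ, 0 ≤ u → 0 ≤ φ u := by
    intro u hu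
    rcases eq_or_lt_of_le hu with rfl | h
    · exact le_of_eq h0.symm
    · exact (hpos u h).le
  have hmono := young_mono hconv h0 hφnn
  have hsuper := young_superadd hconv h0
  -- facts about K and β
  have hφ1 : 0 < φ 1 := hpos 1 one_pos
  have hK2 : (2:ℝ) ≤ K := by
    have h1 := hK 1 one_pos
    have h2 := hsuper 2 one_le_two 1 zero_le_one
    nlinarith
  have hK0 : (0:ℝ) < K := lt_of_lt_of_le two_pos hK2
  set β : ℝ := Real.logb 2 K with hβ_def
  have hβ1 : 1 ≤ β := by
    rw [hβ_def, Real.le_logb_iff_rpow_le one_lt_two hK0, Real.rpow_one]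
    exact hK2
  have hβlt : β < (n:ℝ) / s := by
    rw [hβ_def, Real.logb_lt_iff_lt_rpow one_lt_two hK0]
    exact hKlt
  have hβp : (β - 1) * p < 1 := by
    have h1 : β - 1 < ((n:ℝ) - s) / s := by
      have : (n:ℝ) / s = 1 + ((n:ℝ) - s) / s := by field_simp; ring
      linarith [this ▸ hβlt]
    have h2 : (β - 1) * p < (((n:ℝ) - s) / s) * p := mul_lt_mul_of_pos_right h1 hp
    have h3 : (((n:ℝ) - s) / s) * p = 1 := by
      rw [hp_def]; field_simp
    linarith
  -- the integrand
  set g : ℝ → ℝ := fun τ => (τ / φ τ) ^ p with hg_def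
  have hgnn : ∀ τ : ℝ, 0 < τ → 0 ≤ g τ := by
    intro τ hτ
    have := hφnn τ hτ.le
    rw [hg_def]
    positivity
  have hint : ∀ t : ℝ, 0 < t → IntegrableOn g (Set.Ioo 0 t) := by
    intro t ht
    exact young_g_integrable hcont hpos hK0 hp hβp ht
      (young_lower hmono hpos hK hK2 ht)
  -- integral is nonneg
  have hInn : ∀ t : ℝ, 0 ≤ ∫ τ in Set.Ioo (0:ℝ) t, g τ := by
    intro t
    apply setIntegral_nonneg measurableSet_Ioo
    intro τ hτ
    exact hgnn τ hτ.1
  have hHnn : ∀ t : ℝ, 0 ≤ H t := by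
    intro t
    rw [hH t]
    exact Real.rpow_nonneg (hInn t) q
  -- H is monotone on [0, ∞)
  have hHmono : ∀ u v : ℝ, 0 ≤ u → u ≤ v → H u ≤ H v := by
    intro u v hu huv
    rcases eq_or_lt_of_le (le_trans hu huv) with hv | hv
    · have : u = v := le_antisymm huv (hv ▸ hu)
      rw [this]
    · rw [hH u, hH v]
      apply Real.rpow_le_rpow (hInn u) _ hq.le
      apply setIntegral_mono_set (hint v hv)
      · exact (ae_restrict_iff' measurableSet_Ioo).mpr
          (Filter.Eventually.of_forall (fun τ hτ => hgnn τ hτ.1))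
      · exact Filter.Eventually.of_forall (fun τ hτ => Set.Ioo_subset_Ioo_right huv hτ)
  -- key integral inequality
  have hsub : ∀ t : ℝ, 0 < t →
      (∫ τ in Set.Ioo (0:ℝ) (lam * t), g τ) ≤ lam * ∫ τ in Set.Ioo (0:ℝ) t, g τ := by
    intro t ht
    have hIoo : ∀ (f : ℝ → ℝ) (u : ℝ), 0 ≤ u →
        ∫ τ in Set.Ioo (0:ℝ) u, f τ = ∫ x in (0:ℝ)..u, f x := by
      intro f u hu
      rw [intervalIntegral.integral_of_le hu, integral_Ioc_eq_integral_Ioo]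
    -- pointwise: g (lam * σ) ≤ g σ for σ > 0
    have hptw : ∀ σ : ℝ, 0 < σ → g (lam * σ) ≤ g σ := by
      intro σ hσ
      have hφσ : 0 < φ σ := hpos σ hσ
      have hs1 : lam * φ σ ≤ φ (lam * σ) := hsuper lam hlam1.le σ hσ.le
      have hd : lam * σ / φ (lam * σ) ≤ σ / φ σ := by
        have h1 : lam * σ / φ (lam * σ) ≤ lam * σ / (lam * φ σ) :=
          div_le_div_of_nonneg_left (mul_nonneg hlam0.le hσ.le) (mul_pos hlam0 hφσ) hs1
        have h2 : lam * σ / (lam * φ σ) = σ / φ σ :=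
          mul_div_mul_left σ (φ σ) hlam0.ne'
        linarith [h2 ▸ h1]
      rw [hg_def]
      exact Real.rpow_le_rpow
        (div_nonneg (mul_nonneg hlam0.le hσ.le) (hφnn _ (mul_nonneg hlam0.le hσ.le))) hd hp.le
    -- integrability of the composed function
    have hintc : IntegrableOn (fun σ : ℝ => g (lam * σ)) (Set.Ioo 0 t) := by
      refine Integrable.mono (hint t ht) ?_ ?_
      · apply ContinuousOn.aestronglyMeasurable _ measurableSet_Ioo
        apply ContinuousOn.rpow_const
        · refine ContinuousOn.div (continuous_const.mul continuous_id).continuousOn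
            (hcont.comp (continuous_const.mul continuous_id)).continuousOn ?_
          intro x hx
          have : 0 < lam * x := by
            have := hx.1; positivity
          exact (hpos _ this).ne'
        · intro x _; exact Or.inr hp.le
      · rw [ae_restrict_iff' measurableSet_Ioo]
        refine Filter.Eventually.of_forall (fun σ hσ => ?_)
        have hσ0 := hσ.1
        have hlσ : 0 < lam * σ := by positivity
        rw [Real.norm_of_nonneg (hgnn _ hlσ), Real.norm_of_nonneg (hgnn _ hσ0)]
        exact hptw σ hσ0
    have hchg : ∫ x in (0:ℝ)..t, g (lam * x) = lam⁻¹ * ∫ x in (0:ℝ)..(lam * t), g x := by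
      have := intervalIntegral.integral_comp_mul_left (a := (0:ℝ)) (b := t) g hlam0.ne'
      simpa [mul_zero, smul_eq_mul] using this
    have hmono3 : (∫ σ in Set.Ioo (0:ℝ) t, g (lam * σ)) ≥
        lam⁻¹ * ∫ τ in Set.Ioo (0:ℝ) (lam * t), g τ := by
      rw [hIoo (fun σ => g (lam * σ)) t ht.le, hIoo g (lam * t) (by positivity), hchg]
    have hmono4 : (∫ σ in Set.Ioo (0:ℝ) t, g (lam * σ)) ≤ ∫ σ in Set.Ioo (0:ℝ) t, g σ := by
      apply setIntegral_mono_on hintc (hint t ht) measurableSet_Ioo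
      intro σ hσ
      exact hptw σ hσ.1
    have h5 := le_trans hmono3 hmono4
    have h6 := mul_le_mul_of_nonneg_left h5 hlam0.le
    rw [← mul_assoc, mul_inv_cancel₀ hlam0.ne', one_mul] at h6
    exact h6
  -- H (lam * t) ≤ a * H t for t ≥ 0
  have hHkey : ∀ t : ℝ, 0 ≤ t → H (lam * t) ≤ a * H t := by
    intro t ht
    rcases eq_or_lt_of_le ht with rfl | ht
    · rw [mul_zero]
      have hH0 : H 0 = 0 := by
        rw [hH 0]
        simp [Real.zero_rpow hq.ne']
      rw [hH0, mul_zero]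
    · rw [hH (lam * t), hH t]
      calc (∫ τ in Set.Ioo (0:ℝ) (lam * t), g τ) ^ q
          ≤ (lam * ∫ τ in Set.Ioo (0:ℝ) t, g τ) ^ q :=
            Real.rpow_le_rpow (hInn (lam * t)) (hsub t ht) hq.le
        _ = lam ^ q * (∫ τ in Set.Ioo (0:ℝ) t, g τ) ^ q :=
            Real.mul_rpow hlam0.le (hInn t)
        _ = a * (∫ τ in Set.Ioo (0:ℝ) t, g τ) ^ q := by rw [hlamq]
  -- Hinv is monotone
  have hHinvmono : ∀ u v : ℝ, 0 ≤ u → u ≤ v → Hinv u ≤ Hinv v := by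
    intro u v hu huv
    by_contra hlt
    push_neg at hlt
    have h1 := hHmono _ _ (hHinv v (le_trans hu huv)).2.2 hlt.le
    rw [(hHinv v (le_trans hu huv)).1, (hHinv u hu).1] at h1
    have huv' : u = v := le_antisymm huv h1
    rw [huv'] at hlt
    exact lt_irrefl _ hlt
  -- conclusion
  intro x hx
  obtain ⟨hHt, -, htnn⟩ := hHinv x hx
  set t : ℝ := Hinv x with ht_def
  have h1 : H (lam * t) ≤ a * x := by
    calc H (lam * t) ≤ a * H t := hHkey t htnn
      _ = a * x := by rw [hHt]
  have h2 : lam * t ≤ Hinv (a * x) := by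
    have h3 := hHinvmono (H (lam * t)) (a * x) (hHnn _) h1
    rwa [(hHinv (lam * t) (mul_nonneg hlam0.le htnn)).2.1] at h3
  have h3 : φ (lam * t) ≤ φ (Hinv (a * x)) :=
    hmono _ _ (mul_nonneg hlam0.le htnn) h2
  have h4 : lam * φ t ≤ φ (lam * t) := hsuper lam hlam1.le t htnn
  have h5 : 2 * a * φ t ≤ φ (Hinv (a * x)) := by
    rw [← hlam_eq]
    exact le_trans h4 h3
  show φ (Hinv x) ≤ 1 / (2 * a) * φ (Hinv (a * x))
  rw [← ht_def]
  calc φ t = 1 / (2 * a) * (2 * a * φ t) := by field_simp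
    _ ≤ 1 / (2 * a) * φ (Hinv (a * x)) :=
        mul_le_mul_of_nonneg_left h5 (by positivity)
end
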